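/- Let $(A,\circ_A)$ be a Zinbiel algebra and $P:A\to A$ a Rota-Baxter operator of weight $\lambda$, i.e., $P(x)\circ_A P(y) = P(P(x)\circ_A y + x\circ_A P(y) + \lambda\, x\circ_A y)$. Then the operation $x\cdot_P y := P(x)\circ_A y + x\circ_A P(y) + \lambda\, x\circ_A y$ defines a Zinbiel algebra structure on $A$, and $P:(A,\cdot_P)\to(A,\circ_A)$ is a Zinbiel algebra homomorphism. -/
import Mathlib

/-- The descendent product `x ·_P y := P(x) ∘ y + x ∘ P(y) + λ x ∘ y`. -/
def rbDescendent {K : Type*} [Field K] {A : Type*} [AddCommGroup A] [Module K A]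
    (mul : A →ₗ[K] A →ₗ[K] A) (P : A →ₗ[K] A) (l : K) (x y : A) : A :=
  mul (P x) y + mul x (P y) + l • mul x y

/-- If `P` is a Rota-Baxter operator of weight `λ` on a Zinbiel algebra `(A, ∘)`, then
`x ·_P y := P(x) ∘ y + x ∘ P(y) + λ x ∘ y` is a Zinbiel algebra structure on `A` and
`P : (A, ·_P) → (A, ∘)` is a Zinbiel algebra homomorphism. -/
theorem rota_baxter_descendent_zinbiel {K : Type*} [Field K] {A : Type*} [AddCommGroup A]
    [Module K A] (mul : A →ₗ[K] A →ₗ[K] A)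
    (hZ : ∀ x y z : A, mul x (mul y z) = mul (mul x y + mul y x) z)
    (P : A →ₗ[K] A) (l : K)
    (hP : ∀ x y : A, mul (P x) (P y) = P (mul (P x) y + mul x (P y) + l • mul x y)) :
    (∀ x y z : A,
      rbDescendent mul P l x (rbDescendent mul P l y z)
        = rbDescendent mul P l
            (rbDescendent mul P l x y + rbDescendent mul P l y x) z) ∧
    (∀ x y : A, P (rbDescendent mul P l x y) = mul (P x) (P y)) := by
  constructor
  · intro x y z
    simp only [rbDescendent, ← hP]
    simp only [hZ, map_add, map_smul, LinearMap.add_apply, LinearMap.smul_apply,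
      smul_add]
    simp only [hP, map_add, map_smul, LinearMap.add_apply, LinearMap.smul_apply, smul_add]
    abel
  · intro x y
    simp only [rbDescendent, ← hP]
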